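/- Let φ : M → M' and ψ : M' → M satisfy d'(φ(x),φ(y)) ≤ λ·d(x,y) + c and d(ψ(x'),ψ(y')) ≤ λ·d'(x',y') + c, with ψ∘φ and φ∘ψ both R-close to the identity. Then for every ε > 0, there exist a (R + 2λR + λc + λε + c)-net A ⊂ M and a net A' = φ(A) ⊂ M' such that the restriction of φ to A is a bi-Lipschitz bijection onto A' with bi-Lipschitz constant λ(1 + (2R+c)/ε). -/

import Mathlib

/-- `A` is a `K`-net in a metric space `M`. -/
def IsNet {M : Type*} [MetricSpace M] (K : ℝ) (A : Set M) : Prop :=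
  ∀ x : M, ∃ a ∈ A, dist x a ≤ K

/-- A large scale Lipschitz equivalence with distortion `(λ, c, R)` restricts to a coarse
quasi-isometry with distortion `(R + 2λR + λc + λε + c, λ(1 + (2R + c)/ε))`. -/
theorem large_scale_Lipschitz_equivalence_restricts {M M' : Type*}
    [MetricSpace M] [MetricSpace M'] {l c R : ℝ} (hl : 1 ≤ l) (hc : 0 < c) (hR : 0 < R)
    (φ : M → M') (ψ : M' → M)
    (hφ : ∀ x y : M, dist (φ x) (φ y) ≤ l * dist x y + c)
    (hψ : ∀ x' y' : M', dist (ψ x') (ψ y') ≤ l * dist x' y' + c)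
    (hψφ : ∀ x : M, dist (ψ (φ x)) x ≤ R)
    (hφψ : ∀ x' : M', dist (φ (ψ x')) x' ≤ R) :
    ∀ ε : ℝ, 0 < ε →
      ∃ A : Set M, IsNet (R + 2 * l * R + l * c + l * ε + c) A ∧
        IsNet (R + 2 * l * R + l * c + l * ε + c) (φ '' A) ∧
        Set.InjOn φ A ∧
        ∀ x ∈ A, ∀ y ∈ A,
          (1 / (l * (1 + (2 * R + c) / ε))) * dist x y ≤ dist (φ x) (φ y) ∧
          dist (φ x) (φ y) ≤ l * (1 + (2 * R + c) / ε) * dist x y := by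
  intro ε hε
  have hl0 : (0:ℝ) < l := lt_of_lt_of_le one_pos hl
  set t : ℝ := ε + (2 * R + c) with htdef
  have ht : 0 < t := by positivity
  -- maximal t-separated set via Zorn
  obtain ⟨A, hA⟩ : ∃ A, Maximal (· ∈ {A : Set M | A.Pairwise fun x y => t ≤ dist x y}) A := by
    apply zorn_subset
    intro C hC hchain
    refine ⟨⋃₀ C, ?_, fun s hs => Set.subset_sUnion_of_mem hs⟩
    intro x hx y hy hxy
    obtain ⟨s, hsC, hxs⟩ := hx
    obtain ⟨u, huC, hyu⟩ := hy
    rcases hchain.total hsC huC with h | h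
    · exact hC huC (h hxs) hyu hxy
    · exact hC hsC hxs (h hyu) hxy
  have hAsep : A.Pairwise fun x y => t ≤ dist x y := hA.1
  -- A is a t-net
  have hAnet : ∀ x : M, ∃ a ∈ A, dist x a ≤ t := by
    intro x
    by_contra h
    push_neg at h
    have hxA : x ∉ A := fun hx => by have := h x hx; simp at this; linarith
    have hins : (insert x A).Pairwise fun a b => t ≤ dist a b := by
      haveI : Std.Symm (fun a b : M => t ≤ dist a b) := ⟨fun a b hab => by rwa [dist_comm]⟩
      refine Set.pairwise_insert_of_symm |>.mpr
        ⟨hAsep, fun b hb hne => ?_⟩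
      exact (h b hb).le
    exact hxA (hA.2 hins (Set.subset_insert x A) (Set.mem_insert x A))
  -- key lower bound on distances in A
  have hsep : ∀ x ∈ A, ∀ y ∈ A, x ≠ y → t ≤ dist x y := fun x hx y hy h => hAsep hx hy h
  have hlow : ∀ x y : M, dist x y ≤ l * dist (φ x) (φ y) + c + 2 * R := by
    intro x y
    calc dist x y ≤ dist x (ψ (φ x)) + dist (ψ (φ x)) (ψ (φ y)) + dist (ψ (φ y)) y :=
          dist_triangle4 _ _ _ _
      _ ≤ R + (l * dist (φ x) (φ y) + c) + R := by
          gcongr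
          · rw [dist_comm]; exact hψφ x
          · exact hψ _ _
          · exact hψφ y
      _ = l * dist (φ x) (φ y) + c + 2 * R := by ring
  have hKnet : t ≤ R + 2 * l * R + l * c + l * ε + c := by nlinarith [hR, hc, hε]
  refine ⟨A, fun x => ?_, fun x' => ?_, ?_, ?_⟩
  · obtain ⟨a, ha, hd⟩ := hAnet x
    exact ⟨a, ha, hd.trans hKnet⟩
  · obtain ⟨a, ha, hd⟩ := hAnet (ψ x')
    refine ⟨φ a, Set.mem_image_of_mem φ ha, ?_⟩
    calc dist x' (φ a) ≤ dist x' (φ (ψ x')) + dist (φ (ψ x')) (φ a) := dist_triangle _ _ _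
      _ ≤ R + (l * dist (ψ x') a + c) := by
          gcongr
          · rw [dist_comm]; exact hφψ x'
          · exact hφ _ _
      _ ≤ R + (l * t + c) := by gcongr
      _ ≤ R + 2 * l * R + l * c + l * ε + c := by rw [htdef]; nlinarith
  · intro x hx y hy hxy
    by_contra hne
    have h1 := hsep x hx y hy hne
    have h2 := hlow x y
    rw [hxy] at h2
    simp at h2
    nlinarith
  · intro x hx y hy
    have hK : 0 < l * (1 + (2 * R + c) / ε) := by positivity
    rcases eq_or_ne x y with rfl | hne
    · simp
    · have hD : t ≤ dist x y := hsep x hx y hy hne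
      have h2 := hlow x y
      have hD' : 0 ≤ dist (φ x) (φ y) := dist_nonneg
      constructor
      · have key2 : dist x y * ε ≤ l * (ε + (2 * R + c)) * dist (φ x) (φ y) := by
          nlinarith [mul_le_mul_of_nonneg_right
            (show dist x y - (2 * R + c) ≤ l * dist (φ x) (φ y) by linarith)
            (show (0:ℝ) ≤ ε + (2 * R + c) by positivity),
            mul_nonneg (show (0:ℝ) ≤ 2 * R + c by positivity)
              (show (0:ℝ) ≤ dist x y - t by linarith)]
        rw [div_mul_eq_mul_div, one_mul, div_le_iff₀ hK,
          show l * (1 + (2 * R + c) / ε) = l * (ε + (2 * R + c)) / ε by field_simp; try ring,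
          ← mul_div_assoc, le_div_iff₀ hε]
        nlinarith [key2]
      · have key : dist (φ x) (φ y) * ε ≤ l * (ε + (2 * R + c)) * dist x y := by
          nlinarith [mul_le_mul_of_nonneg_right (hφ x y) hε.le,
            mul_le_mul_of_nonneg_right hD (show (0:ℝ) ≤ 2 * R + c by positivity),
            mul_nonneg (mul_nonneg (sub_nonneg.2 hl) (dist_nonneg (x := x) (y := y)))
              (show (0:ℝ) ≤ 2 * R + c by positivity)]
        rw [show l * (1 + (2 * R + c) / ε) = l * (ε + (2 * R + c)) / ε by field_simp; try ring,
          div_mul_eq_mul_div, le_div_iff₀ hε]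
        nlinarith [key]
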